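/- Suppose 0 ≤ β_a < β_u < δ < β. For each a, set u(a) = (β − δ − (β−β_a)·a)/(β−β_u), which corresponds to i(a, u(a)) = 0. Then f₁(a, u(a)) = (a/(β−β_u))·(α_a·(β_u−β_a)·a + α_a·(δ−β_u) − δ_a·(β−β_u)) for all a. Moreover, if in addition α_a > 0, δ_a > 0 and α_a/δ_a < (β−β_a)/(δ−β_a), then f₁(a, u(a)) < 0 for every a ∈ (0, (β−δ)/(β−β_a)] and f₁(0, u(0)) = 0. -/

import Mathlib

/-- with f₁ the a-equation right-hand side (ε = 0) evaluated on the
endemic-equilibrium plane, and u(a) = (β − δ − (β−β_a)a)/(β−β_u) (the line i = 0),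
f₁(a, u(a)) = (a/(β−β_u))·(α_a(β_u−β_a)a + α_a(δ−β_u) − δ_a(β−β_u)) for all a;
and if moreover α_a > 0, δ_a > 0 and α_a/δ_a < (β−β_a)/(δ−β_a), then
f₁(a, u(a)) < 0 on (0, (β−δ)/(β−β_a)] and f₁(0, u(0)) = 0. -/
theorem sauis_f1_on_hypotenuse
    (β βa βu αi αa δ δa η m : ℝ)
    (hβa0 : 0 ≤ βa) (hβaβu : βa < βu) (hβuδ : βu < δ) (hδβ : δ < β)
    (hη : 0 < η) (hm : 1 ≤ m) :
    let iplane : ℝ → ℝ → ℝ := fun a u => (β - δ - (β - βa) * a - (β - βu) * u) / β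
    let f1 : ℝ → ℝ → ℝ := fun a u =>
      αi * (1 - a - u - iplane a u) * iplane a u + αa * (1 - a - u - iplane a u) * a
        - βa * a * iplane a u - δa * (1 / (1 + (iplane a u / η) ^ m)) * a
    let uline : ℝ → ℝ := fun a => (β - δ - (β - βa) * a) / (β - βu)
    (∀ a : ℝ, f1 a (uline a) =
        (a / (β - βu)) * (αa * (βu - βa) * a + αa * (δ - βu) - δa * (β - βu))) ∧
    (0 < αa → 0 < δa → αa / δa < (β - βa) / (δ - βa) →
      (∀ a : ℝ, 0 < a → a ≤ (β - δ) / (β - βa) → f1 a (uline a) < 0) ∧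
      f1 0 (uline 0) = 0) := by
  intro iplane f1 uline
  have hβ0 : (0:ℝ) < β := by linarith
  have hβu : (0:ℝ) < β - βu := by linarith
  have hβa : (0:ℝ) < β - βa := by linarith
  have hδa' : (0:ℝ) < δ - βa := by linarith
  have hi : ∀ a : ℝ, iplane a (uline a) = 0 := by
    intro a
    simp only [iplane, uline]
    field_simp
    ring
  have hmain : ∀ a : ℝ, f1 a (uline a) =
      (a / (β - βu)) * (αa * (βu - βa) * a + αa * (δ - βu) - δa * (β - βu)) := by
    intro a
    have h0 : ((0:ℝ)/η) ^ m = 0 := by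
      rw [zero_div, Real.zero_rpow (by linarith : m ≠ 0)]
    simp only [f1, hi, h0]
    simp only [uline]
    field_simp
    ring
  refine ⟨hmain, fun hαa hδa hratio => ?_⟩
  have hkey : αa * (δ - βa) < δa * (β - βa) := by
    rw [div_lt_div_iff₀ hδa hδa'] at hratio
    nlinarith
  constructor
  · intro a ha hamax
    rw [hmain a]
    have haβ : a * (β - βa) ≤ β - δ := by
      rw [le_div_iff₀ hβa] at hamax; linarith
    have hL : αa * (βu - βa) * a + αa * (δ - βu) - δa * (β - βu) < 0 := by
      nlinarith [mul_pos hαa (sub_pos.mpr hβaβu)]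
    exact mul_neg_of_pos_of_neg (div_pos ha hβu) hL
  · rw [hmain 0]; ring
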